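/- arXiv:1810.05876 — 2 statements merged into one kernel-verified Lean document; each statement's English description precedes it below -/
import Mathlib

section
/- Let n ≥ 1 and fix 1 ≤ j ≤ n. Then for every real x, ℓ̊_j(x) = Σ_{k=1}^{n} λ_{jk} · x(1−x) · P_{k−1}^{(1,1)}(2x−1), where λ_{jk} := [(2k+1)(k+1)/k] · [ŵ_j/(ξ̂_j(1−ξ̂_j))] · P_{k−1}^{(1,1)}(2ξ̂_j−1). -/
open Real MeasureTheory intervalIntegral Finset

/-- Jacobi polynomial `P_n^{(a,b)}(τ)` for natural index `n` (general real parameters). -/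
noncomputable def jacobiPNat (n : ℕ) (a b τ : ℝ) : ℝ :=
  (1 / 2 ^ n) * ∑ k ∈ Finset.range (n + 1),
    (Real.Gamma ((n : ℝ) + a + 1) / (Real.Gamma ((k : ℝ) + a + 1) * (Nat.factorial (n - k) : ℝ))) *
    (Real.Gamma ((n : ℝ) + b + 1) / (Real.Gamma (((n - k : ℕ) : ℝ) + b + 1) * (Nat.factorial k : ℝ))) *
    (τ - 1) ^ k * (τ + 1) ^ (n - k)

/-- Jacobi polynomial with integer index, with the convention `P_{-1}^{(a,b)} = 0`. -/
noncomputable def jacobiP (m : ℤ) (a b τ : ℝ) : ℝ :=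
  if 0 ≤ m then jacobiPNat m.toNat a b τ else 0

/-- Left Riemann--Liouville fractional derivative of order `α` (for `1 < α < 2`):
`(₀D_x^α g)(x) = (1/Γ(2−α)) (d²/dx²) ∫_0^x (x−s)^{1−α} g(s) ds`. -/
noncomputable def leftRL (α : ℝ) (g : ℝ → ℝ) (x : ℝ) : ℝ :=
  (1 / Real.Gamma (2 - α)) *
    deriv (deriv (fun t : ℝ => ∫ s in (0:ℝ)..t, (t - s) ^ (1 - α) * g s)) x

/-- Right Riemann--Liouville fractional derivative of order `α` (for `1 < α < 2`):
`(ₓD_1^α g)(x) = (1/Γ(2−α)) (d²/dx²) ∫_x^1 (s−x)^{1−α} g(s) ds`. -/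
noncomputable def rightRL (α : ℝ) (g : ℝ → ℝ) (x : ℝ) : ℝ :=
  (1 / Real.Gamma (2 - α)) *
    deriv (deriv (fun t : ℝ => ∫ s in t..(1:ℝ), (s - t) ^ (1 - α) * g s)) x

/-- The function `ζ_k` appearing in the fractional differentiation matrices. -/
noncomputable def zeta (β : ℝ) (k : ℕ) (x : ℝ) : ℝ :=
  Real.Gamma ((k : ℝ) + 1) / Real.Gamma ((k : ℝ) - 1 + β) * x ^ (β - 1) *
      jacobiP ((k : ℤ) - 1) (3 - β) (β - 1) (2 * x - 1)
    - Real.Gamma ((k : ℝ) + 2) / Real.Gamma ((k : ℝ) + β) * (((k : ℝ) + 2) / (2 * (k : ℝ) + 1)) *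
        x ^ β * jacobiP ((k : ℤ) - 1) (3 - β) β (2 * x - 1)
    - Real.Gamma ((k : ℝ) + 1) / Real.Gamma ((k : ℝ) - 1 + β) * ((k : ℝ) / (2 * (k : ℝ) + 1)) *
        x ^ β * jacobiP ((k : ℤ) - 2) (3 - β) β (2 * x - 1)


section AuxLemmas
open Polynomial

def Ff (m c j : ℕ) : ℤ := ∑ k ∈ Finset.range (m+1), (-1:ℤ)^k * (m.choose k) * ((c-k).choose j)

lemma Ff_rec (m c j : ℕ) (hc : m + 1 ≤ c) : Ff (m+1) c (j+1) = Ff m (c-1) j := by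
  unfold Ff
  have h1 : ∑ k ∈ range (m+2), (-1:ℤ)^k * ((m+1).choose k) * ((c-k).choose (j+1))
      = ∑ k ∈ range (m+1), (-((-1:ℤ)^k * (m.choose k) * ((c-(k+1)).choose (j+1)))
          + (-1:ℤ)^(k+1) * (m.choose (k+1)) * ((c-(k+1)).choose (j+1)))
        + (-1:ℤ)^0 * ((m+1).choose 0) * ((c-0).choose (j+1)) := by
    rw [Finset.sum_range_succ']
    congr 1
    refine Finset.sum_congr rfl fun k _ => ?_
    rw [Nat.choose_succ_succ]; push_cast; ring
  rw [h1, Finset.sum_add_distrib]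
  have h2 : ∑ k ∈ range (m+1), (-1:ℤ)^(k+1) * (m.choose (k+1)) * ((c-(k+1)).choose (j+1))
      + (-1:ℤ)^0 * ((m+1).choose 0) * ((c-0).choose (j+1))
      = ∑ k ∈ range (m+1), (-1:ℤ)^k * (m.choose k) * ((c-k).choose (j+1)) := by
    have h := Finset.sum_range_succ' (fun k => (-1:ℤ)^k * (m.choose k) * ((c-k).choose (j+1))) (m+1)
    rw [Finset.sum_range_succ (fun k => (-1:ℤ)^k * (m.choose k) * ((c-k).choose (j+1))) (m+1)] at h
    simp only [Nat.choose_succ_self, Nat.cast_zero, mul_zero, zero_mul, add_zero] at h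
    simpa using h.symm
  have h3 : ∑ k ∈ range (m+1), (-1:ℤ)^k * (m.choose k) * ((c-k).choose (j+1))
      - ∑ k ∈ range (m+1), (-1:ℤ)^k * (m.choose k) * ((c-(k+1)).choose (j+1))
      = ∑ k ∈ range (m+1), (-1:ℤ)^k * (m.choose k) * ((c-1-k).choose j) := by
    rw [← Finset.sum_sub_distrib]
    refine Finset.sum_congr rfl fun k hk => ?_
    have hk' : k ≤ m := Nat.lt_succ_iff.mp (Finset.mem_range.mp hk)
    have e1 : c - k = (c-1-k)+1 := by omega
    have e2 : c - (k+1) = c-1-k := by omega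
    rw [e1, e2, Nat.choose_succ_succ]
    push_cast; ring
  rw [Finset.sum_neg_distrib]
  linarith [h2, h3]

lemma Ff_eval : ∀ (j m c : ℕ), j ≤ m → m + 1 ≤ c → Ff m c j = if j = m then 1 else 0 := by
  intro j
  induction j with
  | zero =>
    intro m c _ _
    unfold Ff
    simp only [Nat.choose_zero_right, Nat.cast_one, mul_one]
    have := Int.alternating_sum_range_choose (n := m)
    simp only [this]
    by_cases hm : m = 0 <;> simp [hm, eq_comm]
  | succ j ih =>
    intro m c hjm hc
    obtain ⟨m', rfl⟩ : ∃ m', m = m' + 1 := ⟨m - 1, by omega⟩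
    rw [Ff_rec m' c j (by omega)]
    rw [ih m' (c-1) (by omega) (by omega)]
    simp [Nat.succ_inj]


lemma beta_nat : ∀ (b a : ℕ), (∫ x in (0:ℝ)..1, x^a * (1-x)^b)
    = (a.factorial * b.factorial : ℝ) / (a+b+1).factorial := by
  intro b
  induction b with
  | zero =>
    intro a
    simp only [pow_zero, mul_one, Nat.factorial_zero, Nat.cast_one, Nat.add_zero]
    rw [integral_pow, Nat.factorial_succ]
    have : ((a:ℝ)+1) ≠ 0 := by positivity
    push_cast
    field_simp
    simp
  | succ b ih =>
    intro a
    have key : (∫ x in (0:ℝ)..1, ((a+1:ℝ) * (x^a * (1-x)^(b+1)) - (b+1:ℝ) * (x^(a+1) * (1-x)^b))) = 0 := by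
      have h : ∀ x ∈ Set.uIcc (0:ℝ) 1, HasDerivAt (fun y : ℝ => y^(a+1) * (1-y)^(b+1))
          ((a+1:ℝ) * (x^a * (1-x)^(b+1)) - (b+1:ℝ) * (x^(a+1) * (1-x)^b)) x := by
        intro x _
        have h1 : HasDerivAt (fun y : ℝ => y^(a+1)) ((a+1:ℝ) * x^a) x := by
          simpa using (hasDerivAt_pow (a+1) x)
        have h2 : HasDerivAt (fun y : ℝ => (1-y)^(b+1)) (-((b+1:ℝ) * (1-x)^b)) x := by
          have := ((hasDerivAt_pow (b+1) (1-x)).comp x (((hasDerivAt_id x).const_sub 1)))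
          simpa [Function.comp_def] using this
        have := h1.fun_mul h2
        exact this.congr_deriv (by ring)
      have hcont : IntervalIntegrable (fun x : ℝ => (a+1:ℝ) * (x^a * (1-x)^(b+1)) - (b+1:ℝ) * (x^(a+1) * (1-x)^b)) MeasureTheory.volume 0 1 := by
        apply Continuous.intervalIntegrable; continuity
      rw [integral_eq_sub_of_hasDerivAt h hcont]
      norm_num
    have ha : IntervalIntegrable (fun x : ℝ => x^a * (1-x)^(b+1)) MeasureTheory.volume 0 1 := by
      apply Continuous.intervalIntegrable; continuity
    have hb : IntervalIntegrable (fun x : ℝ => x^(a+1) * (1-x)^b) MeasureTheory.volume 0 1 := by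
      apply Continuous.intervalIntegrable; continuity
    rw [integral_sub ((ha.const_mul _)) ((hb.const_mul _)), intervalIntegral.integral_const_mul, intervalIntegral.integral_const_mul,
      sub_eq_zero] at key
    have hi := ih (a+1)
    have : (∫ x in (0:ℝ)..1, x^a * (1-x)^(b+1)) = ((b+1:ℝ)/(a+1)) * ((a+1).factorial * b.factorial / ((a+1)+b+1).factorial) := by
      rw [← hi]
      field_simp at key ⊢
      linarith [key]
    rw [this]
    rw [show (a+1)+b+1 = a+(b+1)+1 by ring]
    rw [Nat.factorial_succ (a), Nat.factorial_succ (b)]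
    push_cast
    field_simp

noncomputable def Jq (m : ℕ) : Polynomial ℝ :=
  ∑ k ∈ Finset.range (m+1), (((m+1).choose (k+1) * (m+1).choose k : ℕ) : ℝ) •
    ((Polynomial.X - 1)^k * Polynomial.X^(m-k))

lemma gamma_nat_add_two (k : ℕ) : Real.Gamma ((k:ℝ)+1+1) = ((k+1).factorial : ℝ) := by
  rw [show ((k:ℝ)+1+1) = ((k+1:ℕ):ℝ)+1 by push_cast; ring, Real.Gamma_nat_eq_factorial]

lemma Jq_eval (m : ℕ) (x : ℝ) : (Jq m).eval x = jacobiPNat m 1 1 (2*x-1) := by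
  unfold Jq jacobiPNat
  rw [Polynomial.eval_finset_sum, Finset.mul_sum]
  refine Finset.sum_congr rfl fun k hk => ?_
  have hk' : k ≤ m := Nat.lt_succ_iff.mp (Finset.mem_range.mp hk)
  simp only [Polynomial.eval_smul, Polynomial.eval_mul, Polynomial.eval_pow, Polynomial.eval_sub,
    Polynomial.eval_X, Polynomial.eval_one, smul_eq_mul]
  rw [gamma_nat_add_two m, gamma_nat_add_two k, gamma_nat_add_two (m-k)]
  have e1 : (2*x-1-1:ℝ)^k = 2^k*(x-1)^k := by
    rw [show (2*x-1-1:ℝ) = 2*(x-1) by ring, mul_pow]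
  have e2 : (2*x-1+1:ℝ)^(m-k) = 2^(m-k)*x^(m-k) := by
    rw [show (2*x-1+1:ℝ) = 2*x by ring, mul_pow]
  rw [e1, e2]
  have h2m : (2:ℝ)^k * 2^(m-k) = 2^m := by
    rw [← pow_add, Nat.add_sub_cancel' hk']
  have c1 : (((m+1).choose (k+1)):ℝ) = ((m+1).factorial:ℝ) / (((k+1).factorial:ℝ) * ((m-k).factorial:ℝ)) := by
    rw [Nat.cast_choose ℝ (by omega : k+1 ≤ m+1), show m+1-(k+1) = m-k by omega]
  have c2 : (((m+1).choose k):ℝ) = ((m+1).factorial:ℝ) / ((k.factorial:ℝ) * (((m-k)+1).factorial:ℝ)) := by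
    rw [Nat.cast_choose ℝ (by omega : k ≤ m+1)]
    rw [show m+1-k = (m-k)+1 by omega]
  push_cast [c1, c2]
  have n1 : ((k+1).factorial:ℝ) ≠ 0 := by positivity
  have n2 : ((m-k).factorial:ℝ) ≠ 0 := by positivity
  have n3 : (k.factorial:ℝ) ≠ 0 := by positivity
  have n4 : (((m-k)+1).factorial:ℝ) ≠ 0 := by positivity
  have n5 : (2:ℝ)^m ≠ 0 := by positivity
  field_simp
  rw [← h2m]
  ring

lemma Jq_monomial_monic (m k : ℕ) (hk : k ≤ m) :
    ((Polynomial.X - 1 : Polynomial ℝ)^k * Polynomial.X^(m-k)).Monic ∧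
    ((Polynomial.X - 1 : Polynomial ℝ)^k * Polynomial.X^(m-k)).natDegree = m := by
  have h1 : (Polynomial.X - 1 : Polynomial ℝ).Monic := by
    simpa using Polynomial.monic_X_sub_C (1:ℝ)
  have hm : ((Polynomial.X - 1 : Polynomial ℝ)^k * Polynomial.X^(m-k)).Monic :=
    (h1.pow k).mul (Polynomial.monic_X_pow _)
  refine ⟨hm, ?_⟩
  rw [(h1.pow k).natDegree_mul (Polynomial.monic_X_pow _)]
  have hd1 : (Polynomial.X - 1 : Polynomial ℝ).natDegree = 1 := by
    simpa using Polynomial.natDegree_X_sub_C (1:ℝ)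
  rw [h1.natDegree_pow, Polynomial.natDegree_X_pow, hd1]
  omega

lemma Jq_natDegree_le (m : ℕ) : (Jq m).natDegree ≤ m := by
  unfold Jq
  refine Polynomial.natDegree_sum_le_of_forall_le _ _ fun k hk => ?_
  have hk' : k ≤ m := Nat.lt_succ_iff.mp (Finset.mem_range.mp hk)
  refine le_trans (Polynomial.natDegree_smul_le _ _) ?_
  exact le_of_eq (Jq_monomial_monic m k hk').2

lemma Jq_coeff_top (m : ℕ) : (Jq m).coeff m = (((2*m+2).choose m : ℕ) : ℝ) := by
  unfold Jq
  rw [Polynomial.finset_sum_coeff]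
  have : ∀ k ∈ Finset.range (m+1),
      ((((m+1).choose (k+1) * (m+1).choose k : ℕ) : ℝ) •
        ((Polynomial.X - 1 : Polynomial ℝ)^k * Polynomial.X^(m-k))).coeff m
      = (((m+1).choose (k+1) * (m+1).choose k : ℕ) : ℝ) := by
    intro k hk
    have hk' : k ≤ m := Nat.lt_succ_iff.mp (Finset.mem_range.mp hk)
    obtain ⟨hm, hd⟩ := Jq_monomial_monic m k hk'
    rw [Polynomial.coeff_smul, smul_eq_mul]
    have h2 := hm.coeff_natDegree
    rw [hd] at h2
    rw [h2, mul_one]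
  rw [Finset.sum_congr rfl this]
  rw [← Nat.cast_sum]
  congr 1
  rw [show 2*m+2 = (m+1)+(m+1) by ring, Nat.add_choose_eq,
    Finset.Nat.sum_antidiagonal_eq_sum_range_succ (fun i j => (m+1).choose i * (m+1).choose j)]
  refine Finset.sum_congr rfl fun k hk => ?_
  have hk' : k ≤ m := Nat.lt_succ_iff.mp (Finset.mem_range.mp hk)
  have : m - k = (m+1) - (k+1) := by omega
  rw [this, Nat.choose_symm (by omega), mul_comm]

lemma Jq_natDegree (m : ℕ) : (Jq m).natDegree = m := by
  refine le_antisymm (Jq_natDegree_le m) ?_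
  refine Polynomial.le_natDegree_of_ne_zero ?_
  rw [Jq_coeff_top]
  have : 0 < (2*m+2).choose m := Nat.choose_pos (by omega)
  positivity

lemma Jq_coeff_top_ne_zero (m : ℕ) : (Jq m).coeff m ≠ 0 := by
  rw [Jq_coeff_top]
  have : 0 < (2*m+2).choose m := Nat.choose_pos (by omega)
  positivity

lemma Jq_integral (m j : ℕ) (hj : j ≤ m) :
    (∫ x in (0:ℝ)..1, x*(1-x)*(x^j * (Jq m).eval x))
      = if j = m then (((m+1).factorial:ℝ))^2 / ((2*m+3).factorial:ℝ) else 0 := by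
  have hev : ∀ x : ℝ, x*(1-x)*(x^j * (Jq m).eval x)
      = ∑ k ∈ Finset.range (m+1), (((m+1).choose (k+1) * (m+1).choose k : ℕ) : ℝ) *
          ((-1:ℝ)^k * (x^(m+j+1-k) * (1-x)^(k+1))) := by
    intro x
    unfold Jq
    rw [Polynomial.eval_finset_sum, Finset.mul_sum, Finset.mul_sum]
    refine Finset.sum_congr rfl fun k hk => ?_
    have hk' : k ≤ m := Nat.lt_succ_iff.mp (Finset.mem_range.mp hk)
    simp only [Polynomial.eval_smul, Polynomial.eval_mul, Polynomial.eval_pow,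
      Polynomial.eval_sub, Polynomial.eval_X, Polynomial.eval_one, smul_eq_mul]
    have e1 : (x-1:ℝ)^k = (-1:ℝ)^k * (1-x)^k := by
      rw [show (x-1:ℝ) = (-1) * (1-x) by ring, mul_pow]
    rw [e1]
    have e2 : x * x^j * x^(m-k) = x^(m+j+1-k) := by
      rw [show m+j+1-k = 1+j+(m-k) by omega, pow_add, pow_add, pow_one]
    rw [← e2]
    ring
  rw [intervalIntegral.integral_congr (g := fun x => ∑ k ∈ Finset.range (m+1),
      (((m+1).choose (k+1) * (m+1).choose k : ℕ) : ℝ) *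
        ((-1:ℝ)^k * (x^(m+j+1-k) * (1-x)^(k+1)))) (fun x _ => hev x)]
  have hint : ∀ k ∈ Finset.range (m+1), IntervalIntegrable (fun x : ℝ =>
      (((m+1).choose (k+1) * (m+1).choose k : ℕ) : ℝ) *
        ((-1:ℝ)^k * (x^(m+j+1-k) * (1-x)^(k+1)))) MeasureTheory.volume 0 1 := by
    intro k _
    apply Continuous.intervalIntegrable
    continuity
  rw [intervalIntegral.integral_finset_sum hint]
  have hterm : ∀ k ∈ Finset.range (m+1),
      (∫ x in (0:ℝ)..1, (((m+1).choose (k+1) * (m+1).choose k : ℕ) : ℝ) *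
        ((-1:ℝ)^k * (x^(m+j+1-k) * (1-x)^(k+1))))
      = (((m+1).factorial:ℝ)^2 * (j.factorial:ℝ) / ((m.factorial:ℝ) * ((m+j+3).factorial:ℝ))) *
          ((-1:ℝ)^k * (m.choose k : ℝ) * (((m+j+1-k).choose j : ℕ) : ℝ)) := by
    intro k hk
    have hk' : k ≤ m := Nat.lt_succ_iff.mp (Finset.mem_range.mp hk)
    rw [intervalIntegral.integral_const_mul, intervalIntegral.integral_const_mul,
      beta_nat (k+1) (m+j+1-k)]
    rw [show (m+j+1-k)+(k+1)+1 = m+j+3 by omega]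
    -- now the pure arithmetic identity
    have c1 : (((m+1).choose (k+1)):ℝ) = ((m+1).factorial:ℝ) / (((k+1).factorial:ℝ) * ((m-k).factorial:ℝ)) := by
      rw [Nat.cast_choose ℝ (by omega : k+1 ≤ m+1), show m+1-(k+1) = m-k by omega]
    have c2 : (((m+1).choose k):ℝ) = ((m+1).factorial:ℝ) / ((k.factorial:ℝ) * (((m-k)+1).factorial:ℝ)) := by
      rw [Nat.cast_choose ℝ (by omega : k ≤ m+1), show m+1-k = (m-k)+1 by omega]
    have c3 : ((m.choose k):ℝ) = ((m.factorial):ℝ) / ((k.factorial:ℝ) * ((m-k).factorial:ℝ)) := by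
      rw [Nat.cast_choose ℝ hk']
    have c4 : (((m+j+1-k).choose j):ℝ) = (((m+j+1-k).factorial):ℝ) / ((j.factorial:ℝ) * (((m-k)+1).factorial:ℝ)) := by
      rw [Nat.cast_choose ℝ (by omega : j ≤ m+j+1-k), show m+j+1-k-j = (m-k)+1 by omega]
    push_cast [c1, c2, c3, c4]
    have n1 : ((k+1).factorial:ℝ) ≠ 0 := by positivity
    have n2 : ((m-k).factorial:ℝ) ≠ 0 := by positivity
    have n3 : (k.factorial:ℝ) ≠ 0 := by positivity
    have n4 : (((m-k)+1).factorial:ℝ) ≠ 0 := by positivity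
    have n5 : ((m+j+3).factorial:ℝ) ≠ 0 := by positivity
    have n6 : (m.factorial:ℝ) ≠ 0 := by positivity
    have n7 : (j.factorial:ℝ) ≠ 0 := by positivity
    field_simp
  rw [Finset.sum_congr rfl hterm, ← Finset.mul_sum]
  have hFf : ∑ k ∈ Finset.range (m+1),
      ((-1:ℝ)^k * (m.choose k : ℝ) * (((m+j+1-k).choose j : ℕ) : ℝ))
      = ((Ff m (m+j+1) j : ℤ) : ℝ) := by
    unfold Ff
    push_cast
    rfl
  rw [hFf, Ff_eval j m (m+j+1) hj (by omega)]
  by_cases h : j = m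
  · subst h
    simp only [if_pos rfl]
    push_cast
    rw [show 2*j+3 = j+j+3 by ring]
    have n5 : ((j+j+3).factorial:ℝ) ≠ 0 := by positivity
    have n6 : (j.factorial:ℝ) ≠ 0 := by positivity
    have : ((j+1).factorial:ℝ) ≠ 0 := by positivity
    field_simp
  · simp [h]


noncomputable def iiP (p : Polynomial ℝ) : ℝ := ∫ x in (0:ℝ)..1, x*(1-x)*p.eval x

lemma contInt (p : Polynomial ℝ) :
    IntervalIntegrable (fun x : ℝ => x*(1-x)*p.eval x) MeasureTheory.volume 0 1 := by
  apply Continuous.intervalIntegrable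
  exact (continuous_id.mul (continuous_const.sub continuous_id)).mul p.continuous

lemma iiP_zero : iiP 0 = 0 := by
  unfold iiP; simp

lemma iiP_add (p q : Polynomial ℝ) : iiP (p + q) = iiP p + iiP q := by
  unfold iiP
  rw [← intervalIntegral.integral_add (contInt p) (contInt q)]
  congr 1
  funext x
  simp [Polynomial.eval_add]
  ring

lemma iiP_smul (c : ℝ) (p : Polynomial ℝ) : iiP (c • p) = c * iiP p := by
  unfold iiP
  rw [← intervalIntegral.integral_const_mul]
  congr 1
  funext x
  simp [Polynomial.eval_smul]
  ring

lemma iiP_sum {ι : Type*} (s : Finset ι) (f : ι → Polynomial ℝ) :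
    iiP (∑ i ∈ s, f i) = ∑ i ∈ s, iiP (f i) := by
  classical
  induction s using Finset.induction with
  | empty => simp [iiP_zero]
  | insert a s h ih => rw [Finset.sum_insert h, iiP_add, ih, Finset.sum_insert h]

lemma iiP_X_pow_Jq (m j : ℕ) (hj : j ≤ m) :
    iiP (Polynomial.X^j * Jq m)
      = if j = m then (((m+1).factorial:ℝ))^2 / ((2*m+3).factorial:ℝ) else 0 := by
  rw [← Jq_integral m j hj]
  unfold iiP
  congr 1
  funext x
  simp [Polynomial.eval_mul, Polynomial.eval_pow]

lemma iiP_mul_Jq_orth (p : Polynomial ℝ) (m : ℕ) (h : p.natDegree < m) :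
    iiP (p * Jq m) = 0 := by
  conv_lhs => rw [Polynomial.as_sum_range' p m h]
  rw [Finset.sum_mul, iiP_sum]
  rw [Finset.sum_eq_zero]
  intro i hi
  have hi' : i < m := Finset.mem_range.mp hi
  have : (Polynomial.monomial i (p.coeff i) : Polynomial ℝ) = p.coeff i • Polynomial.X^i := by
    rw [Polynomial.smul_X_eq_monomial]
  rw [this, smul_mul_assoc, iiP_smul, iiP_X_pow_Jq m i (by omega), if_neg (by omega)]
  ring

lemma iiP_Jq_Jq_ne (a b : ℕ) (hab : a ≠ b) : iiP (Jq a * Jq b) = 0 := by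
  rcases Nat.lt_or_ge a b with h | h
  · exact iiP_mul_Jq_orth _ _ (by rw [Jq_natDegree]; omega)
  · rw [mul_comm]
    exact iiP_mul_Jq_orth _ _ (by rw [Jq_natDegree]; omega)

lemma natDegree_lt_of_coeff_zero {p : Polynomial ℝ} {m : ℕ} (h1 : p.natDegree ≤ m)
    (h2 : p.coeff m = 0) (h3 : p ≠ 0) : p.natDegree < m := by
  rcases lt_or_eq_of_le h1 with h | h
  · exact h
  · exfalso
    apply Polynomial.leadingCoeff_ne_zero.mpr h3
    rw [Polynomial.leadingCoeff, h, h2]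

lemma iiP_Jq_sq (m : ℕ) :
    iiP (Jq m * Jq m) = ((m:ℝ)+1)/((2*(m:ℝ)+3)*((m:ℝ)+2)) := by
  set L : ℝ := (Jq m).coeff m with hL
  set R : Polynomial ℝ := Jq m - L • Polynomial.X^m with hRdef
  have hsplit : Jq m = R + L • Polynomial.X^m := by rw [hRdef]; ring
  have hRcoeff : R.coeff m = 0 := by
    rw [hRdef]
    simp [Polynomial.coeff_smul, Polynomial.coeff_X_pow]
    rw [hL, sub_self]
  have hRdeg : R.natDegree ≤ m := by
    rw [hRdef]
    refine le_trans (Polynomial.natDegree_sub_le _ _) ?_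
    simp only [max_le_iff]
    exact ⟨Jq_natDegree_le m, le_trans (Polynomial.natDegree_smul_le _ _) (by simp)⟩
  have hRzero : iiP (R * Jq m) = 0 := by
    by_cases hR : R = 0
    · rw [hR, zero_mul, iiP_zero]
    · exact iiP_mul_Jq_orth _ _ (natDegree_lt_of_coeff_zero hRdeg hRcoeff hR)
  have : iiP (Jq m * Jq m) = iiP (R * Jq m) + L * iiP (Polynomial.X^m * Jq m) := by
    have hmm : Jq m * Jq m = R * Jq m + L • (Polynomial.X^m * Jq m) := by
      rw [← smul_mul_assoc, ← add_mul, ← hsplit]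
    rw [hmm, iiP_add, iiP_smul]
  rw [this, hRzero, zero_add, iiP_X_pow_Jq m m le_rfl, if_pos rfl, hL, Jq_coeff_top]
  have c1 : (((2*m+2).choose m):ℝ) = (((2*m+2).factorial):ℝ) / ((m.factorial:ℝ) * ((m+2).factorial:ℝ)) := by
    rw [Nat.cast_choose ℝ (by omega : m ≤ 2*m+2), show 2*m+2-m = m+2 by omega]
  rw [c1]
  rw [show (2*m+3) = (2*m+2)+1 by omega, Nat.factorial_succ (2*m+2)]
  rw [show (m+2) = (m+1)+1 by omega, Nat.factorial_succ (m+1), Nat.factorial_succ m]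
  push_cast
  have n1 : ((2*m+2).factorial:ℝ) ≠ 0 := by positivity
  have n2 : (m.factorial:ℝ) ≠ 0 := by positivity
  have n3 : ((m:ℝ)+1) ≠ 0 := by positivity
  have n4 : ((m:ℝ)+2) ≠ 0 := by positivity
  have n5 : (2*(m:ℝ)+3) ≠ 0 := by positivity
  field_simp
  ring

lemma span_Jq : ∀ (m : ℕ) (p : Polynomial ℝ), p.natDegree ≤ m →
    ∃ e : ℕ → ℝ, p = ∑ i ∈ Finset.range (m+1), e i • Jq i := by
  intro m
  induction m with
  | zero =>
    intro p hp
    refine ⟨fun _ => p.coeff 0, ?_⟩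
    have hJ0 : Jq 0 = 1 := by
      unfold Jq
      simp
    have hpc := Polynomial.eq_C_of_natDegree_le_zero hp
    rw [Finset.sum_range_one, hJ0, smul_eq_C_mul, mul_one]
    exact hpc
  | succ m ih =>
    intro p hp
    set L : ℝ := (Jq (m+1)).coeff (m+1) with hLdef
    have hLne : L ≠ 0 := Jq_coeff_top_ne_zero (m+1)
    set q : Polynomial ℝ := p - (p.coeff (m+1) / L) • Jq (m+1) with hqdef
    have hqcoeff : q.coeff (m+1) = 0 := by
      rw [hqdef]
      simp only [Polynomial.coeff_sub, Polynomial.coeff_smul, smul_eq_mul]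
      rw [← hLdef]
      field_simp
      simp
    have hqdeg : q.natDegree ≤ m + 1 := by
      rw [hqdef]
      refine le_trans (Polynomial.natDegree_sub_le _ _) ?_
      simp only [max_le_iff]
      exact ⟨hp, le_trans (Polynomial.natDegree_smul_le _ _) (Jq_natDegree_le (m+1))⟩
    have hqdeg' : q.natDegree ≤ m := by
      by_cases hq : q = 0
      · rw [hq]; simp
      · exact Nat.lt_succ_iff.mp (natDegree_lt_of_coeff_zero hqdeg hqcoeff hq)
    obtain ⟨e, he⟩ := ih q hqdeg'
    refine ⟨fun i => if i = m+1 then p.coeff (m+1) / L else e i, ?_⟩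
    rw [Finset.sum_range_succ]
    have : ∑ i ∈ Finset.range (m+1), (if i = m+1 then p.coeff (m+1) / L else e i) • Jq i
        = ∑ i ∈ Finset.range (m+1), e i • Jq i := by
      refine Finset.sum_congr rfl fun i hi => ?_
      rw [if_neg (by have := Finset.mem_range.mp hi; omega)]
    rw [this, ← he, hqdef]
    simp only [if_true]
    ring

end AuxLemmas

/-- Lemma 1: expansion of the modified Lagrange basis `ℓ̊_j` in terms of
`x(1−x)P_{k−1}^{(1,1)}(2x−1)`, with coefficients
`λ_{jk} = [(2k+1)(k+1)/k]·[ŵ_j/(ξ̂_j(1−ξ̂_j))]·P_{k−1}^{(1,1)}(2ξ̂_j−1)`. -/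
theorem modified_basis_expansion (n : ℕ) (hn : 1 ≤ n) (ξ : Fin n → ℝ)
    (hξmem : ∀ i, ξ i ∈ Set.Ioo (-1 : ℝ) 1)
    (hξinj : Function.Injective ξ)
    (hξroot : ∀ i, jacobiPNat n 1 1 (ξ i) = 0)
    (ξh : Fin n → ℝ) (hξh : ∀ i, ξh i = (ξ i + 1) / 2)
    (ℓ : Fin n → ℝ → ℝ)
    (hℓ : ∀ j x, ℓ j x = ∏ k ∈ Finset.univ.erase j, (x - ξh k) / (ξh j - ξh k))
    (ℓm : Fin n → ℝ → ℝ)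
    (hℓm : ∀ j x, ℓm j x = (x * (1 - x) / (ξh j * (1 - ξh j))) * ℓ j x)
    (w : Fin n → ℝ) (hw : ∀ j, w j = ∫ x in (0:ℝ)..1, x * (1 - x) * ℓ j x)
    (j : Fin n) (x : ℝ) :
    ℓm j x = ∑ k ∈ Finset.Icc 1 n,
      ((2 * (k : ℝ) + 1) * ((k : ℝ) + 1) / (k : ℝ)) * (w j / (ξh j * (1 - ξh j))) *
        jacobiP ((k : ℤ) - 1) 1 1 (2 * ξh j - 1) *
        (x * (1 - x) * jacobiP ((k : ℤ) - 1) 1 1 (2 * x - 1)) := by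
  classical
  have hn' : 0 < n := hn
  have hξh01 : ∀ i, ξh i ∈ Set.Ioo (0:ℝ) 1 := by
    intro i
    have h1 := (hξmem i).1
    have h2 := (hξmem i).2
    rw [hξh i]
    constructor <;> [linarith; linarith]
  have hξhinj : Function.Injective ξh := by
    intro a b hab
    apply hξinj
    rw [hξh a, hξh b] at hab
    linarith
  have hne : ∀ a b : Fin n, a ≠ b → ξh a - ξh b ≠ 0 := by
    intro a b h
    exact sub_ne_zero.mpr (fun hh => h (hξhinj hh))
  set Lp : Fin n → Polynomial ℝ := fun i => ∏ k ∈ Finset.univ.erase i,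
    Polynomial.C ((ξh i - ξh k)⁻¹) * (Polynomial.X - Polynomial.C (ξh k)) with hLp
  have hLpeval : ∀ i x, (Lp i).eval x = ℓ i x := by
    intro i y
    rw [hℓ i y, hLp]
    simp only [Polynomial.eval_prod, Polynomial.eval_mul, Polynomial.eval_C,
      Polynomial.eval_sub, Polynomial.eval_X]
    refine Finset.prod_congr rfl fun k hk => ?_
    rw [div_eq_inv_mul]
  have hLpdeg : ∀ i, (Lp i).natDegree ≤ n - 1 := by
    intro i
    rw [hLp]
    refine le_trans (Polynomial.natDegree_prod_le _ _) ?_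
    have : ∀ k ∈ Finset.univ.erase i,
        (Polynomial.C ((ξh i - ξh k)⁻¹) * (Polynomial.X - Polynomial.C (ξh k))).natDegree ≤ 1 := by
      intro k _
      refine le_trans (Polynomial.natDegree_mul_le) ?_
      simp [Polynomial.natDegree_X_sub_C]
    refine le_trans (Finset.sum_le_card_nsmul _ _ 1 this) ?_
    simp [Finset.card_erase_of_mem]
  have hLpnode : ∀ i k, (Lp i).eval (ξh k) = if k = i then 1 else 0 := by
    intro i k
    by_cases h : k = i
    · subst h
      rw [if_pos rfl, hLp, Polynomial.eval_prod]
      refine Finset.prod_eq_one fun t ht => ?_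
      have htk : t ≠ k := (Finset.mem_erase.mp ht).1
      simp only [Polynomial.eval_mul, Polynomial.eval_C, Polynomial.eval_sub, Polynomial.eval_X]
      rw [inv_mul_eq_div, div_self (hne k t (fun hh => htk hh.symm))]
    · rw [if_neg h, hLp, Polynomial.eval_prod]
      refine Finset.prod_eq_zero (Finset.mem_erase.mpr ⟨h, Finset.mem_univ k⟩) ?_
      simp
  have hwi : ∀ i, iiP (Lp i) = w i := by
    intro i
    rw [hw i]
    unfold iiP
    congr 1
    funext y
    rw [hLpeval]
  set piP : Polynomial ℝ := ∏ i : Fin n, (Polynomial.X - Polynomial.C (ξh i)) with hpiP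
  have hpimonic : piP.Monic :=
    Polynomial.monic_prod_of_monic _ _ fun i _ => Polynomial.monic_X_sub_C _
  have hpideg : piP.natDegree = n := by
    rw [hpiP, Polynomial.natDegree_prod _ _ (fun i _ => Polynomial.X_sub_C_ne_zero _)]
    simp [Polynomial.natDegree_X_sub_C]
  have hpinode : ∀ i, piP.eval (ξh i) = 0 := by
    intro i
    rw [hpiP, Polynomial.eval_prod]
    exact Finset.prod_eq_zero (Finset.mem_univ i) (by simp)
  set Ln : ℝ := (Jq n).coeff n with hLndef
  have hLnne : Ln ≠ 0 := Jq_coeff_top_ne_zero n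
  have hJqnpi : Jq n = Ln • piP := by
    have hpicoeff : piP.coeff n = 1 := by
      have := hpimonic.coeff_natDegree
      rwa [hpideg] at this
    have hd : (Jq n - Ln • piP).natDegree ≤ n := by
      refine le_trans (Polynomial.natDegree_sub_le _ _) ?_
      simp only [max_le_iff]
      refine ⟨Jq_natDegree_le n, le_trans (Polynomial.natDegree_smul_le _ _) (le_of_eq hpideg)⟩
    have hc : (Jq n - Ln • piP).coeff n = 0 := by
      simp only [Polynomial.coeff_sub, Polynomial.coeff_smul, smul_eq_mul, hpicoeff, mul_one]
      rw [← hLndef]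
      ring
    have heval : ∀ i, (Jq n - Ln • piP).eval (ξh i) = 0 := by
      intro i
      rw [Polynomial.eval_sub, Jq_eval n (ξh i)]
      have h21 : 2 * ξh i - 1 = ξ i := by rw [hξh i]; ring
      rw [h21, hξroot i, Polynomial.eval_smul, hpinode i]
      simp
    have hz : Jq n - Ln • piP = 0 := by
      by_cases h0 : Jq n - Ln • piP = 0
      · exact h0
      · refine Polynomial.eq_zero_of_natDegree_lt_card_of_eval_eq_zero _ hξhinj heval ?_
        rw [Fintype.card_fin]
        exact natDegree_lt_of_coeff_zero hd hc h0
    linear_combination hz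
  have hinterp : ∀ r : Polynomial ℝ, r.natDegree < n →
      r = ∑ i : Fin n, (r.eval (ξh i)) • Lp i := by
    intro r hr
    have hsumdeg : (∑ i : Fin n, (r.eval (ξh i)) • Lp i).natDegree ≤ n - 1 :=
      Polynomial.natDegree_sum_le_of_forall_le _ _ fun i _ =>
        le_trans (Polynomial.natDegree_smul_le _ _) (hLpdeg i)
    have heval : ∀ k, (r - ∑ i : Fin n, (r.eval (ξh i)) • Lp i).eval (ξh k) = 0 := by
      intro k
      rw [Polynomial.eval_sub, Polynomial.eval_finset_sum]
      have : ∀ i ∈ Finset.univ, i ≠ k → ((r.eval (ξh i)) • Lp i).eval (ξh k) = 0 := by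
        intro i _ hik
        rw [Polynomial.eval_smul, smul_eq_mul, hLpnode i k, if_neg (fun hh => hik hh.symm), mul_zero]
      rw [Finset.sum_eq_single k this (fun h => absurd (Finset.mem_univ k) h)]
      rw [Polynomial.eval_smul, smul_eq_mul, hLpnode k k, if_pos rfl, mul_one, sub_self]
    have hz : r - ∑ i : Fin n, (r.eval (ξh i)) • Lp i = 0 := by
      by_cases h0 : r - ∑ i : Fin n, (r.eval (ξh i)) • Lp i = 0
      · exact h0
      · refine Polynomial.eq_zero_of_natDegree_lt_card_of_eval_eq_zero _ hξhinj heval ?_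
        rw [Fintype.card_fin]
        refine lt_of_le_of_lt (le_trans (Polynomial.natDegree_sub_le _ _) ?_) (by omega : n - 1 < n)
        simp only [max_le_iff]
        exact ⟨by omega, hsumdeg⟩
    linear_combination hz
  have hGauss : ∀ p : Polynomial ℝ, p.natDegree ≤ 2*n - 2 →
      iiP p = ∑ i : Fin n, w i * p.eval (ξh i) := by
    intro p hdeg
    have hdiv := Polynomial.modByMonic_add_div p piP
    have hrdeg : (p %ₘ piP).natDegree < n := by
      by_cases h0 : p %ₘ piP = 0
      · rw [h0]; simpa using hn'
      · have hlt := Polynomial.degree_modByMonic_lt p hpimonic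
        have := Polynomial.natDegree_lt_natDegree h0 hlt
        rwa [hpideg] at this
    have hqdeg : (p /ₘ piP).natDegree < n := by
      rw [Polynomial.natDegree_divByMonic p hpimonic, hpideg]
      omega
    have hiiq : iiP (piP * (p /ₘ piP)) = 0 := by
      have hrw : piP * (p /ₘ piP) = Ln⁻¹ • ((p /ₘ piP) * Jq n) := by
        rw [hJqnpi, mul_smul_comm, smul_smul, inv_mul_cancel₀ hLnne, one_smul, mul_comm]
      rw [hrw, iiP_smul, iiP_mul_Jq_orth _ n hqdeg, mul_zero]
    have hiir : iiP (p %ₘ piP) = ∑ i : Fin n, w i * (p %ₘ piP).eval (ξh i) := by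
      conv_lhs => rw [hinterp _ hrdeg]
      rw [iiP_sum]
      refine Finset.sum_congr rfl fun i _ => ?_
      rw [iiP_smul, hwi i]
      ring
    have hpeval : ∀ i, p.eval (ξh i) = (p %ₘ piP).eval (ξh i) := by
      intro i
      conv_lhs => rw [← hdiv]
      rw [Polynomial.eval_add, Polynomial.eval_mul, hpinode i, zero_mul, add_zero]
    calc iiP p = iiP (p %ₘ piP + piP * (p /ₘ piP)) := by rw [hdiv]
      _ = iiP (p %ₘ piP) + iiP (piP * (p /ₘ piP)) := iiP_add _ _
      _ = ∑ i : Fin n, w i * p.eval (ξh i) := by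
          rw [hiiq, add_zero, hiir]
          exact Finset.sum_congr rfl fun i _ => by rw [hpeval i]
  have hγne : ∀ i : ℕ, ((i:ℝ)+1)/((2*(i:ℝ)+3)*((i:ℝ)+2)) ≠ 0 := by
    intro i
    apply div_ne_zero <;> positivity
  set c : ℕ → ℝ := fun i => w j * (Jq i).eval (ξh j) / (((i:ℝ)+1)/((2*(i:ℝ)+3)*((i:ℝ)+2)))
    with hcdef
  set E : Polynomial ℝ := ∑ i ∈ Finset.range n, c i • Jq i with hE
  have hEdeg : E.natDegree ≤ n - 1 := by
    rw [hE]
    refine Polynomial.natDegree_sum_le_of_forall_le _ _ fun i hi => ?_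
    refine le_trans (Polynomial.natDegree_smul_le _ _) ?_
    rw [Jq_natDegree]
    have := Finset.mem_range.mp hi
    omega
  have htest : ∀ t, t < n → iiP ((Lp j - E) * Jq t) = 0 := by
    intro t ht
    have hsub : iiP ((Lp j - E) * Jq t) = iiP (Lp j * Jq t) - iiP (E * Jq t) := by
      have hh : (Lp j - E) * Jq t = Lp j * Jq t + (-1 : ℝ) • (E * Jq t) := by
        rw [neg_one_smul]
        ring
      rw [hh, iiP_add, iiP_smul]
      ring
    have h1 : iiP (Lp j * Jq t) = w j * (Jq t).eval (ξh j) := by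
      rw [hGauss _ (by
        refine le_trans (Polynomial.natDegree_mul_le) ?_
        have h1 := hLpdeg j
        have h2 := Jq_natDegree t
        omega)]
      have hzero : ∀ b ∈ Finset.univ, b ≠ j → w b * (Lp j * Jq t).eval (ξh b) = 0 := by
        intro b _ hbj
        rw [Polynomial.eval_mul, hLpnode j b, if_neg hbj, zero_mul, mul_zero]
      rw [Finset.sum_eq_single j hzero (fun h => absurd (Finset.mem_univ j) h)]
      rw [Polynomial.eval_mul, hLpnode j j, if_pos rfl, one_mul]
    have h2 : iiP (E * Jq t) = c t * (((t:ℝ)+1)/((2*(t:ℝ)+3)*((t:ℝ)+2))) := by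
      rw [hE, Finset.sum_mul, iiP_sum]
      have hzero : ∀ b ∈ Finset.range n, b ≠ t → iiP ((c b • Jq b) * Jq t) = 0 := by
        intro b _ hbt
        rw [smul_mul_assoc, iiP_smul, iiP_Jq_Jq_ne b t hbt, mul_zero]
      rw [Finset.sum_eq_single t hzero (fun h => absurd (Finset.mem_range.mpr ht) h)]
      rw [smul_mul_assoc, iiP_smul, iiP_Jq_sq t]
    rw [hsub, h1, h2, hcdef]
    field_simp
    simp
  have hLpE : Lp j = E := by
    have hdeg : (Lp j - E).natDegree ≤ n - 1 := by
      refine le_trans (Polynomial.natDegree_sub_le _ _) ?_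
      simp only [max_le_iff]
      exact ⟨hLpdeg j, hEdeg⟩
    obtain ⟨e, he⟩ := span_Jq (n-1) (Lp j - E) hdeg
    rw [show n - 1 + 1 = n by omega] at he
    have hall : ∀ t ∈ Finset.range n, e t • Jq t = 0 := by
      intro t ht'
      have ht : t < n := Finset.mem_range.mp ht'
      have htt := htest t ht
      rw [he, Finset.sum_mul, iiP_sum] at htt
      have hzero : ∀ b ∈ Finset.range n, b ≠ t → iiP ((e b • Jq b) * Jq t) = 0 := by
        intro b _ hbt
        rw [smul_mul_assoc, iiP_smul, iiP_Jq_Jq_ne b t hbt, mul_zero]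
      rw [Finset.sum_eq_single t hzero (fun h => absurd ht' h)] at htt
      rw [smul_mul_assoc, iiP_smul, iiP_Jq_sq t] at htt
      rcases mul_eq_zero.mp htt with h | h
      · rw [h, zero_smul]
      · exact absurd h (hγne t)
    have : Lp j - E = 0 := by
      rw [he]
      exact Finset.sum_eq_zero hall
    linear_combination this
  have hd0 : ξh j * (1 - ξh j) ≠ 0 := by
    have h1 := (hξh01 j).1
    have h2 := (hξh01 j).2
    have : 1 - ξh j > 0 := by linarith
    positivity
  rw [hℓm j x, ← hLpeval j x, hLpE, hE, Polynomial.eval_finset_sum]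
  rw [show Finset.Icc 1 n = Finset.Ico 1 (n+1) by rw [Finset.Ico_add_one_right_eq_Icc],
    Finset.sum_Ico_eq_sum_range]
  rw [show n + 1 - 1 = n from rfl, Finset.mul_sum]
  refine Finset.sum_congr rfl fun i hi => ?_
  have hi' : i < n := Finset.mem_range.mp hi
  have hjp : ∀ t : ℝ, jacobiP (((1+i : ℕ) : ℤ) - 1) 1 1 t = jacobiPNat i 1 1 t := by
    intro t
    have hcast : (((1+i : ℕ) : ℤ) - 1) = (i : ℤ) := by push_cast; ring
    rw [hcast]
    simp [jacobiP]
  rw [hjp, hjp, ← Jq_eval i (ξh j), ← Jq_eval i x]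
  rw [Polynomial.eval_smul, smul_eq_mul, hcdef]
  have hip1 : ((i:ℝ)+1) ≠ 0 := by positivity
  have hden : ((2*(i:ℝ)+3)*((i:ℝ)+2)) ≠ 0 := by positivity
  have hcast1 : ((1+i : ℕ) : ℝ) = (i:ℝ) + 1 := by push_cast; ring
  rw [hcast1]
  field_simp
  ring
end

section
/- Let 0 < β < 1 and k ≥ 1. Then for every x ∈ (0,1], the left Riemann–Liouville fractional derivative of order 2−β of the function s ↦ s(1−s)·P_{k−1}^{(1,1)}(2s−1) exists at x and equals ζ_k(x); that is, ₀D_x^{2−β}[x(1−x)P_{k−1}^{(1,1)}(2x−1)] = ζ_k(x). -/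
set_option maxHeartbeats 1600000


open Real MeasureTheory intervalIntegral Finset

private lemma pascal_split (m : ℕ) (f : ℕ → ℝ) :
    ∑ i ∈ range (m+2), ((m+1).choose i : ℝ) * f i
      = ∑ i ∈ range (m+1), (m.choose i : ℝ) * f i
        + ∑ i ∈ range (m+1), (m.choose i : ℝ) * f (i+1) := by
  rw [Finset.sum_range_succ' (fun i => ((m+1).choose i : ℝ) * f i) (m+1)]
  simp only [Nat.choose_succ_succ, Nat.cast_add, add_mul, Nat.choose_zero_right, Nat.cast_one,
    one_mul]
  rw [Finset.sum_add_distrib]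
  have h1 : ∑ i ∈ range (m+1), (m.choose (i+1) : ℝ) * f (i+1) + f 0
      = ∑ i ∈ range (m+1), (m.choose i : ℝ) * f i := by
    rw [Finset.sum_range_succ' (fun i => (m.choose i : ℝ) * f i) m,
      Finset.sum_range_succ (fun i => (m.choose (i+1) : ℝ) * f (i+1)) m]
    simp [Nat.choose_eq_zero_of_lt (Nat.lt_succ_self m)]
  linarith [h1]

private lemma gamma_vandermonde : ∀ (m : ℕ) (A B : ℝ), 0 < A → 0 < B → 1 < A + B →
    ∑ i ∈ range (m+1), (m.choose i : ℝ) / (Real.Gamma (A + i) * Real.Gamma (B + ((m - i : ℕ) : ℝ)))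
      = Real.Gamma (A + B + 2*m - 1) /
        (Real.Gamma (A + m) * Real.Gamma (B + m) * Real.Gamma (A + B + m - 1)) := by
  intro m
  induction m with
  | zero =>
      intro A B hA hB hAB
      have h : Real.Gamma (A + B - 1) ≠ 0 := ne_of_gt (Real.Gamma_pos_of_pos (by linarith))
      rw [Finset.sum_range_one]
      norm_num
      field_simp
  | succ m ih =>
      intro A B hA hB hAB
      have key : ∑ i ∈ range (m+2), ((m+1).choose i : ℝ) /
          (Real.Gamma (A + i) * Real.Gamma (B + ((m + 1 - i : ℕ) : ℝ)))
          = ∑ i ∈ range (m+1), (m.choose i : ℝ) / (Real.Gamma ((A+1) + i) * Real.Gamma (B + ((m - i : ℕ) : ℝ)))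
          + ∑ i ∈ range (m+1), (m.choose i : ℝ) / (Real.Gamma (A + i) * Real.Gamma ((B+1) + ((m - i : ℕ) : ℝ))) := by
        have := pascal_split m (fun i => 1 / (Real.Gamma (A + i) * Real.Gamma (B + ((m + 1 - i : ℕ) : ℝ))))
        simp only [mul_one_div] at this
        rw [this]
        rw [add_comm]
        congr 1
        · apply Finset.sum_congr rfl
          intro i hi
          rw [mem_range] at hi
          have h1 : (m + 1 - (i+1) : ℕ) = (m - i : ℕ) := by omega
          rw [h1]
          congr 2
          push_cast; ring
        · apply Finset.sum_congr rfl
          intro i hi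
          rw [mem_range] at hi
          have h1 : (m + 1 - i : ℕ) = (m - i) + 1 := by omega
          rw [h1]
          congr 3
          push_cast; ring
      rw [key, ih (A+1) B (by linarith) hB (by linarith), ih A (B+1) hA (by linarith) (by linarith)]
      have gA : 0 < Real.Gamma (A + m) := Real.Gamma_pos_of_pos (by positivity)
      have gB : 0 < Real.Gamma (B + m) := Real.Gamma_pos_of_pos (by positivity)
      have gAB : 0 < Real.Gamma (A + B + m - 1) := Real.Gamma_pos_of_pos (by push_cast; linarith [Nat.cast_nonneg (α := ℝ) m])
      have g2 : 0 < Real.Gamma (A + B + 2*m) := Real.Gamma_pos_of_pos (by positivity)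
      have e1 : Real.Gamma ((A+1) + m) = (A + m) * Real.Gamma (A + m) := by
        rw [show (A+1) + (m:ℝ) = (A + m) + 1 by ring, Real.Gamma_add_one (by positivity)]
      have e2 : Real.Gamma ((B+1) + m) = (B + m) * Real.Gamma (B + m) := by
        rw [show (B+1) + (m:ℝ) = (B + m) + 1 by ring, Real.Gamma_add_one (by positivity)]
      have e3 : Real.Gamma (A + (B+1) + m - 1) = Real.Gamma ((A+1) + B + m - 1) := by ring_nf
      have e4 : Real.Gamma ((A+1) + B + m - 1) = Real.Gamma (A + B + m) := by ring_nf
      have e5 : Real.Gamma ((A+1) + B + 2*m - 1) = Real.Gamma (A + B + 2*m) := by ring_nf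
      have e6 : Real.Gamma (A + (B+1) + 2*m - 1) = Real.Gamma (A + B + 2*m) := by ring_nf
      have e7 : Real.Gamma (A + B + 2*(m+1:ℕ) - 1) = (A + B + 2*m) * Real.Gamma (A + B + 2*m) := by
        push_cast
        rw [show A + B + 2*((m:ℝ)+1) - 1 = (A + B + 2*m) + 1 by ring, Real.Gamma_add_one (by positivity)]
      have e8 : Real.Gamma (A + ((m+1:ℕ):ℝ)) = (A + m) * Real.Gamma (A + m) := by
        push_cast
        rw [show A + ((m:ℝ)+1) = (A + m) + 1 by ring, Real.Gamma_add_one (by positivity)]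
      have e9 : Real.Gamma (B + ((m+1:ℕ):ℝ)) = (B + m) * Real.Gamma (B + m) := by
        push_cast
        rw [show B + ((m:ℝ)+1) = (B + m) + 1 by ring, Real.Gamma_add_one (by positivity)]
      have e10 : Real.Gamma (A + B + ((m+1:ℕ):ℝ) - 1) = Real.Gamma (A + B + m) := by push_cast; ring_nf
      have gABm : 0 < Real.Gamma (A + B + m) := Real.Gamma_pos_of_pos (by positivity)
      rw [e1, e2, e3, e4, e5, e6, e7, e8, e9, e10]
      field_simp
      ring

/-- coefficient of `x^m` in `P_n^{(a,b)}(2x-1)` -/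
noncomputable def Ecoef (n m : ℕ) (a b : ℝ) : ℝ :=
  (-1)^(n-m) * (Real.Gamma ((n:ℝ)+b+1) * Real.Gamma ((n:ℝ)+(m:ℝ)+a+b+1)) /
    ((m.factorial : ℝ) * ((n-m).factorial : ℝ) * Real.Gamma ((m:ℝ)+b+1) * Real.Gamma ((n:ℝ)+a+b+1))

lemma jacobiPNat_expand (n : ℕ) (a b : ℝ) (ha : -1 < a) (hb : -1 < b) (hab : -1 < a + b) (x : ℝ) :
    jacobiPNat n a b (2*x-1) = ∑ m ∈ range (n+1), Ecoef n m a b * x^m := by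
  -- notation for the Jacobi sum coefficients
  set G : ℕ → ℝ := fun j => (Real.Gamma ((n : ℝ) + a + 1) / (Real.Gamma ((j : ℝ) + a + 1) * ((n - j).factorial : ℝ))) *
    (Real.Gamma ((n : ℝ) + b + 1) / (Real.Gamma (((n - j : ℕ) : ℝ) + b + 1) * (j.factorial : ℝ))) with hG
  have step1 : jacobiPNat n a b (2*x-1)
      = ∑ j ∈ range (n+1), G j * ((x-1)^j * x^(n-j)) := by
    rw [jacobiPNat, Finset.mul_sum]
    apply Finset.sum_congr rfl
    intro j hj
    rw [mem_range] at hj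
    have h2 : (2*x-1-1) = 2*(x-1) := by ring
    have h3 : (2*x-1+1) = 2*x := by ring
    rw [h2, h3, mul_pow, mul_pow]
    have h4 : (2:ℝ)^j * (2:ℝ)^(n-j) = 2^n := by
      rw [← pow_add]; congr 1; omega
    have h5 : (1:ℝ)/2^n * (G j * (2^j*(x-1)^j) * (2^(n-j)*x^(n-j)))
        = G j * ((x-1)^j * x^(n-j)) * ((2^j*2^(n-j))/2^n) := by ring
    rw [h5, h4, div_self (by positivity), mul_one]
  have step2 : ∀ j, (x-1:ℝ)^j = ∑ i ∈ range (j+1), (-1)^(i+j) * x^i * (j.choose i : ℝ) := by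
    intro j
    rw [sub_pow x 1 j]
    apply Finset.sum_congr rfl
    intro i _
    simp [mul_comm]
  have step3 : jacobiPNat n a b (2*x-1)
      = ∑ j ∈ range (n+1), ∑ i ∈ range (j+1),
          G j * ((-1:ℝ)^(i+j) * (j.choose i : ℝ)) * x^(i+(n-j)) := by
    rw [step1]
    apply Finset.sum_congr rfl
    intro j _
    rw [step2 j, Finset.sum_mul, Finset.mul_sum]
    apply Finset.sum_congr rfl
    intro i _
    rw [pow_add]
    ring
  rw [step3, Finset.sum_sigma' (range (n+1)) (fun j => range (j+1))
    (fun j i => G j * ((-1:ℝ)^(i+j) * (j.choose i : ℝ)) * x^(i+(n-j)))]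
  rw [Finset.sum_nbij' (i := fun p => (⟨n - p.1 + p.2, p.2⟩ : (_ : ℕ) × ℕ))
    (j := fun q => (⟨n - q.1 + q.2, q.2⟩ : (_ : ℕ) × ℕ))
    (t := (range (n+1)).sigma (fun m => range (m+1)))
    (g := fun q => G (n - q.1 + q.2) * ((-1:ℝ)^(q.2 + (n - q.1 + q.2)) * ((n - q.1 + q.2).choose q.2 : ℝ)) * x^q.1)]
  · rw [Finset.sum_sigma]
    apply Finset.sum_congr rfl
    intro m hm
    rw [mem_range] at hm
    show (∑ i ∈ range (m+1), G (n - m + i) * ((-1:ℝ)^(i+(n - m + i)) * ((n - m + i).choose i : ℝ)) * x^m)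
      = Ecoef n m a b * x^m
    rw [← Finset.sum_mul]
    congr 1
    have hmn : m ≤ n := by omega
    set r := n - m with hr
    have hn2 : n = m + r := by omega
    have hA : (0:ℝ) < (r:ℝ) + a + 1 := by
      have : (0:ℝ) ≤ (r:ℝ) := Nat.cast_nonneg r
      linarith
    have hB : (0:ℝ) < b + 1 := by linarith
    have hAB : (1:ℝ) < ((r:ℝ)+a+1) + (b+1) := by
      have : (0:ℝ) ≤ (r:ℝ) := Nat.cast_nonneg r
      linarith
    have vand := gamma_vandermonde m ((r:ℝ)+a+1) (b+1) hA hB hAB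
    have term : ∀ i ∈ range (m+1),
        G (r+i) * ((-1:ℝ)^(i+(r+i)) * ((r+i).choose i : ℝ))
        = ((-1:ℝ)^r * (Real.Gamma ((n:ℝ)+a+1) * Real.Gamma ((n:ℝ)+b+1) / ((r.factorial:ℝ) * (m.factorial:ℝ))))
            * ((m.choose i : ℝ) / (Real.Gamma (((r:ℝ)+a+1) + (i:ℝ)) * Real.Gamma ((b+1) + ((m - i:ℕ):ℝ)))) := by
      intro i hi
      rw [mem_range] at hi
      have him : i ≤ m := by omega
      have h1 : n - (r + i) = m - i := by omega
      have hsign : (-1:ℝ)^(i+(r+i)) = (-1:ℝ)^r := by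
        have : i + (r + i) = 2*i + r := by omega
        rw [this, pow_add, pow_mul]
        norm_num
      rw [hsign, hG]
      simp only [h1]
      rw [Nat.cast_choose ℝ (Nat.le_add_left i r), Nat.cast_choose ℝ him]
      have h2 : (r + i) - i = r := by omega
      rw [h2]
      have g1 : Real.Gamma (((r+i:ℕ):ℝ) + a + 1) = Real.Gamma (((r:ℝ)+a+1) + (i:ℝ)) := by
        push_cast; ring_nf
      have g2 : Real.Gamma (((m - i:ℕ):ℝ) + b + 1) = Real.Gamma ((b+1) + ((m - i:ℕ):ℝ)) := by
        ring_nf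
      rw [g1, g2]
      have n1 : Real.Gamma (((r:ℝ)+a+1) + (i:ℝ)) ≠ 0 := by
        have : (0:ℝ) ≤ (i:ℝ) := Nat.cast_nonneg i
        exact ne_of_gt (Real.Gamma_pos_of_pos (by linarith))
      have n2 : Real.Gamma ((b+1) + ((m - i:ℕ):ℝ)) ≠ 0 := by
        have : (0:ℝ) ≤ ((m-i:ℕ):ℝ) := Nat.cast_nonneg _
        exact ne_of_gt (Real.Gamma_pos_of_pos (by linarith))
      have f1 : ((r+i).factorial : ℝ) ≠ 0 := by positivity
      have f2 : (r.factorial : ℝ) ≠ 0 := by positivity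
      have f3 : (i.factorial : ℝ) ≠ 0 := by positivity
      have f4 : (m.factorial : ℝ) ≠ 0 := by positivity
      have f5 : ((m-i).factorial : ℝ) ≠ 0 := by positivity
      have hc : ((m - i:ℕ):ℝ) = (m:ℝ) - (i:ℝ) := Nat.cast_sub him
      have n2' : Real.Gamma (b + 1 + ((m:ℝ) - (i:ℝ))) ≠ 0 := by rw [← hc]; exact n2
      push_cast
      field_simp
    rw [Finset.sum_congr rfl term, ← Finset.mul_sum, vand]
    rw [Ecoef]
    have hrfac : ((n - m).factorial : ℝ) = (r.factorial : ℝ) := by rw [← hr]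
    have hnr : (n:ℝ) = (m:ℝ) + (r:ℝ) := by exact_mod_cast congrArg (Nat.cast (R := ℝ)) hn2
    have g3 : Real.Gamma (((r:ℝ)+a+1) + (b+1) + 2*(m:ℝ) - 1) = Real.Gamma ((n:ℝ)+(m:ℝ)+a+b+1) := by
      rw [hnr]; ring_nf
    have g4 : Real.Gamma (((r:ℝ)+a+1) + (m:ℝ)) = Real.Gamma ((n:ℝ)+a+1) := by
      rw [hnr]; ring_nf
    have g5 : Real.Gamma ((b+1) + (m:ℝ)) = Real.Gamma ((m:ℝ)+b+1) := by ring_nf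
    have g6 : Real.Gamma (((r:ℝ)+a+1) + (b+1) + (m:ℝ) - 1) = Real.Gamma ((n:ℝ)+a+b+1) := by
      rw [hnr]; ring_nf
    rw [g3, g4, g5, g6, ← hr, hrfac]
    have p1 : Real.Gamma ((n:ℝ)+a+1) ≠ 0 := by
      have : (0:ℝ) ≤ (n:ℝ) := Nat.cast_nonneg n
      exact ne_of_gt (Real.Gamma_pos_of_pos (by linarith))
    have p2 : Real.Gamma ((m:ℝ)+b+1) ≠ 0 := by
      have : (0:ℝ) ≤ (m:ℝ) := Nat.cast_nonneg m
      exact ne_of_gt (Real.Gamma_pos_of_pos (by linarith))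
    have p3 : Real.Gamma ((n:ℝ)+a+b+1) ≠ 0 := by
      have : (0:ℝ) ≤ (n:ℝ) := Nat.cast_nonneg n
      exact ne_of_gt (Real.Gamma_pos_of_pos (by linarith))
    have f2 : (r.factorial : ℝ) ≠ 0 := by positivity
    have f4 : (m.factorial : ℝ) ≠ 0 := by positivity
    field_simp
  · rintro ⟨j, i⟩ hp
    simp only [mem_sigma, mem_range] at hp ⊢
    omega
  · rintro ⟨m, i⟩ hq
    simp only [mem_sigma, mem_range] at hq ⊢
    omega
  · rintro ⟨j, i⟩ hp
    simp only [mem_sigma, mem_range] at hp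
    simp only [Sigma.mk.inj_iff, heq_eq_eq, and_true]
    omega
  · rintro ⟨m, i⟩ hq
    simp only [mem_sigma, mem_range] at hq
    simp only [Sigma.mk.inj_iff, heq_eq_eq, and_true]
    omega
  · rintro ⟨j, i⟩ hp
    simp only [mem_sigma, mem_range] at hp
    have h1 : n - (n - j + i) + i = j := by omega
    have h2 : i + (n - j) = n - j + i := by omega
    simp only [h1, h2]

lemma integrable_monomial {β : ℝ} (hβ : 0 < β) (n : ℕ) (t : ℝ) :
    IntervalIntegrable (fun s => (t-s)^(β-1) * s^n) volume 0 t := by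
  have h1 : IntervalIntegrable (fun s : ℝ => (t-s)^(β-1)) volume 0 t := by
    have := (intervalIntegral.intervalIntegrable_rpow' (a := t) (b := 0)
      (r := β-1) (by linarith)).comp_sub_left t
    simpa using this
  exact h1.mul_continuousOn (by fun_prop)

lemma integral_monomial {β : ℝ} (hβ : 0 < β) (n : ℕ) {t : ℝ} (ht : 0 < t) :
    ∫ s in (0:ℝ)..t, (t - s)^(β-1) * s^n
      = ((n.factorial : ℝ) / ∏ j ∈ range (n+1), (β + j)) * t^((n:ℝ)+β) := by
  have key := Complex.betaIntegral_scaled ((n:ℂ)+1) (β:ℂ) ht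
  have heq : ∀ s ∈ Set.uIcc (0:ℝ) t,
      ((((t - s)^(β-1) * s^n : ℝ)) : ℂ) = (s:ℂ)^((n:ℂ)+1-1) * ((t:ℂ)-(s:ℂ))^((β:ℂ)-1) := by
    intro s hs
    rw [Set.uIcc_of_le ht.le] at hs
    obtain ⟨hs0, hst⟩ := hs
    have e1 : ((n:ℂ)+1-1) = ((n:ℝ):ℂ) := by push_cast; ring
    have e2 : ((β:ℂ)-1) = ((β-1:ℝ):ℂ) := by push_cast; ring
    rw [e1, e2, ← Complex.ofReal_cpow hs0, ← Complex.ofReal_sub, ← Complex.ofReal_cpow (by linarith)]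
    rw [← Complex.ofReal_mul]
    norm_cast
    ring
  have lhs_eq : (∫ s in (0:ℝ)..t, (s:ℂ)^((n:ℂ)+1-1) * ((t:ℂ)-(s:ℂ))^((β:ℂ)-1))
      = (((∫ s in (0:ℝ)..t, (t - s)^(β-1) * s^n : ℝ)) : ℂ) := by
    calc (∫ s in (0:ℝ)..t, (s:ℂ)^((n:ℂ)+1-1) * ((t:ℂ)-(s:ℂ))^((β:ℂ)-1))
        = ∫ s in (0:ℝ)..t, (((t - s)^(β-1) * s^n : ℝ) : ℂ) :=
          intervalIntegral.integral_congr (fun s hs => (heq s hs).symm)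
      _ = (((∫ s in (0:ℝ)..t, (t - s)^(β-1) * s^n : ℝ)) : ℂ) := RCLike.intervalIntegral_ofReal
  have beta_eq : Complex.betaIntegral ((n:ℂ)+1) (β:ℂ)
      = (((n.factorial : ℝ) / ∏ j ∈ range (n+1), (β + j) : ℝ) : ℂ) := by
    rw [← Complex.betaIntegral_symm, Complex.betaIntegral_eval_nat_add_one_right
      (by simpa using hβ) n]
    push_cast
    rfl
  have rhs_eq : ((t:ℂ))^((n:ℂ)+1+(β:ℂ)-1) = ((t^((n:ℝ)+β) : ℝ) : ℂ) := by
    have e3 : ((n:ℂ)+1+(β:ℂ)-1) = (((n:ℝ)+β : ℝ):ℂ) := by push_cast; ring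
    rw [e3, Complex.ofReal_cpow ht.le]
  rw [lhs_eq, beta_eq, rhs_eq] at key
  have := key
  rw [← Complex.ofReal_mul, mul_comm] at this
  exact_mod_cast this

private lemma gamma_cast_fact (q : ℕ) : Real.Gamma ((q:ℝ)+1) = (q.factorial : ℝ) :=
  Real.Gamma_nat_eq_factorial q

private lemma ident1 {β : ℝ} (hβ0 : 0 < β) (hβ1 : β < 1) (n m : ℕ) :
    Ecoef n m 1 1 * (((m+1).factorial : ℝ) / Real.Gamma ((m:ℝ)+β))
    = (Real.Gamma ((n:ℝ)+2) / Real.Gamma ((n:ℝ)+β)) * Ecoef n m (3-β) (β-1) := by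
  unfold Ecoef
  have c1 : Real.Gamma ((n:ℝ)+1+1) = Real.Gamma ((n:ℝ)+2) := by ring_nf
  have c2 : Real.Gamma ((n:ℝ)+(m:ℝ)+1+1+1) = Real.Gamma ((n:ℝ)+(m:ℝ)+3) := by ring_nf
  have c3 : Real.Gamma ((m:ℝ)+1+1) = ((m+1).factorial : ℝ) := by
    rw [show (m:ℝ)+1+1 = (((m+1:ℕ)):ℝ)+1 by push_cast; ring, gamma_cast_fact]
  have c4 : Real.Gamma ((n:ℝ)+1+1+1) = Real.Gamma ((n:ℝ)+3) := by ring_nf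
  have c5 : Real.Gamma ((n:ℝ)+(β-1)+1) = Real.Gamma ((n:ℝ)+β) := by ring_nf
  have c6 : Real.Gamma ((n:ℝ)+(m:ℝ)+(3-β)+(β-1)+1) = Real.Gamma ((n:ℝ)+(m:ℝ)+3) := by ring_nf
  have c7 : Real.Gamma ((m:ℝ)+(β-1)+1) = Real.Gamma ((m:ℝ)+β) := by ring_nf
  have c8 : Real.Gamma ((n:ℝ)+(3-β)+(β-1)+1) = Real.Gamma ((n:ℝ)+3) := by ring_nf
  rw [c1, c2, c3, c4, c5, c6, c7, c8]
  have hnn : (0:ℝ) ≤ (n:ℝ) := Nat.cast_nonneg n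
  have hmm : (0:ℝ) ≤ (m:ℝ) := Nat.cast_nonneg m
  have p1 : Real.Gamma ((n:ℝ)+β) ≠ 0 := ne_of_gt (Real.Gamma_pos_of_pos (by linarith))
  have p2 : Real.Gamma ((m:ℝ)+β) ≠ 0 := ne_of_gt (Real.Gamma_pos_of_pos (by linarith))
  have p3 : Real.Gamma ((n:ℝ)+3) ≠ 0 := ne_of_gt (Real.Gamma_pos_of_pos (by linarith))
  have p4 : Real.Gamma ((n:ℝ)+(m:ℝ)+3) ≠ 0 := ne_of_gt (Real.Gamma_pos_of_pos (by linarith))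
  have f1 : ((m+1).factorial : ℝ) ≠ 0 := by positivity
  have f2 : (m.factorial : ℝ) ≠ 0 := by positivity
  have f3 : (((n-m).factorial : ℕ) : ℝ) ≠ 0 := by positivity
  field_simp

private lemma ident2b {β : ℝ} (hβ0 : 0 < β) (hβ1 : β < 1) (n : ℕ) :
    Ecoef n n 1 1 * (((n+2).factorial : ℝ) / Real.Gamma ((n:ℝ)+1+β))
    = (Real.Gamma ((n:ℝ)+3) / Real.Gamma ((n:ℝ)+1+β)) * (((n:ℝ)+3)/(2*(n:ℝ)+3))
        * Ecoef n n (3-β) β := by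
  unfold Ecoef
  simp only [Nat.sub_self, pow_zero, Nat.factorial_zero, Nat.cast_one, one_mul, mul_one]
  have hnn : (0:ℝ) ≤ (n:ℝ) := Nat.cast_nonneg n
  have c1 : Real.Gamma ((n:ℝ)+1+1) = ((n+1).factorial : ℝ) := by
    rw [show (n:ℝ)+1+1 = (((n+1:ℕ)):ℝ)+1 by push_cast; ring, gamma_cast_fact]
  have c2 : Real.Gamma ((n:ℝ)+(n:ℝ)+1+1+1) = Real.Gamma (2*(n:ℝ)+3) := by ring_nf
  have c4 : Real.Gamma ((n:ℝ)+1+1+1) = ((n+2).factorial : ℝ) := by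
    rw [show (n:ℝ)+1+1+1 = (((n+2:ℕ)):ℝ)+1 by push_cast; ring, gamma_cast_fact]
  have c5 : Real.Gamma ((n:ℝ)+β+1) = Real.Gamma ((n:ℝ)+1+β) := by ring_nf
  have c6 : Real.Gamma ((n:ℝ)+(n:ℝ)+(3-β)+β+1) = (2*(n:ℝ)+3) * Real.Gamma (2*(n:ℝ)+3) := by
    rw [show (n:ℝ)+(n:ℝ)+(3-β)+β+1 = (2*(n:ℝ)+3)+1 by ring,
      Real.Gamma_add_one (by positivity)]
  have c7 : Real.Gamma ((n:ℝ)+(3-β)+β+1) = ((n:ℝ)+3) * Real.Gamma ((n:ℝ)+3) := by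
    rw [show (n:ℝ)+(3-β)+β+1 = ((n:ℝ)+3)+1 by ring, Real.Gamma_add_one (by positivity)]
  have c8 : Real.Gamma ((n:ℝ)+3) = ((n+2).factorial : ℝ) := by
    rw [show (n:ℝ)+3 = (((n+2:ℕ)):ℝ)+1 by push_cast; ring, gamma_cast_fact]
  rw [c1, c2, c4, c5, c6, c7, c8]
  have p1 : Real.Gamma ((n:ℝ)+1+β) ≠ 0 := ne_of_gt (Real.Gamma_pos_of_pos (by linarith))
  have p2 : Real.Gamma ((n:ℝ)+β+1) ≠ 0 := ne_of_gt (Real.Gamma_pos_of_pos (by linarith))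
  have p3 : Real.Gamma (2*(n:ℝ)+3) ≠ 0 := ne_of_gt (Real.Gamma_pos_of_pos (by linarith))
  have p4 : Real.Gamma ((n:ℝ)+β) ≠ 0 := ne_of_gt (Real.Gamma_pos_of_pos (by linarith))
  have f1 : ((n+2).factorial : ℝ) ≠ 0 := by positivity
  have f2 : (n.factorial : ℝ) ≠ 0 := by positivity
  have f3 : ((n+1).factorial : ℝ) ≠ 0 := by positivity
  have hc : (2*(n:ℝ)+3) ≠ 0 := by linarith
  field_simp

private lemma ident2a {β : ℝ} (hβ0 : 0 < β) (hβ1 : β < 1) (n m : ℕ) (hm : m < n) :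
    Ecoef n m 1 1 * (((m+2).factorial : ℝ) / Real.Gamma ((m:ℝ)+1+β))
    = (Real.Gamma ((n:ℝ)+3) / Real.Gamma ((n:ℝ)+1+β)) * (((n:ℝ)+3)/(2*(n:ℝ)+3))
        * Ecoef n m (3-β) β
      + (Real.Gamma ((n:ℝ)+2) / Real.Gamma ((n:ℝ)+β)) * (((n:ℝ)+1)/(2*(n:ℝ)+3))
        * Ecoef (n-1) m (3-β) β := by
  unfold Ecoef
  have hnn : (0:ℝ) ≤ (n:ℝ) := Nat.cast_nonneg n
  have hmm : (0:ℝ) ≤ (m:ℝ) := Nat.cast_nonneg m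
  have hmn : (m:ℝ) + 1 ≤ (n:ℝ) := by exact_mod_cast hm
  -- casts for n-1
  have d1 : ((n-1:ℕ):ℝ) = (n:ℝ) - 1 := by
    rw [Nat.cast_sub (by omega)]; norm_num
  -- sign and factorial for (n-m) = (n-1-m)+1
  have d2 : (n - m) = (n-1-m) + 1 := by omega
  have d3 : ((n-m).factorial : ℝ) = ((n:ℝ)-(m:ℝ)) * ((n-1-m).factorial : ℝ) := by
    rw [d2, Nat.factorial_succ]
    push_cast [show (n-1-m)+1 = n - m by omega, Nat.cast_sub (show m ≤ n by omega)]
    ring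
  have d4 : ((-1:ℝ))^(n-m) = -((-1:ℝ))^(n-1-m) := by
    rw [d2, pow_succ]; ring
  have d5 : (n-1) - m = n-1-m := by omega
  rw [d3, d4, d5, d1]
  -- Gamma arg conversions
  have c1 : Real.Gamma ((n:ℝ)+1+1) = Real.Gamma ((n:ℝ)+2) := by ring_nf
  have c2 : Real.Gamma ((n:ℝ)+(m:ℝ)+1+1+1) = Real.Gamma ((n:ℝ)+(m:ℝ)+3) := by ring_nf
  have c3 : Real.Gamma ((m:ℝ)+1+1) = ((m+1).factorial : ℝ) := by
    rw [show (m:ℝ)+1+1 = (((m+1:ℕ)):ℝ)+1 by push_cast; ring, gamma_cast_fact]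
  have c4 : Real.Gamma ((n:ℝ)+1+1+1) = Real.Gamma ((n:ℝ)+3) := by ring_nf
  have c5 : Real.Gamma ((n:ℝ)+β+1) = Real.Gamma ((n:ℝ)+1+β) := by ring_nf
  have c6 : Real.Gamma ((n:ℝ)+(m:ℝ)+(3-β)+β+1) = ((n:ℝ)+(m:ℝ)+3) * Real.Gamma ((n:ℝ)+(m:ℝ)+3) := by
    rw [show (n:ℝ)+(m:ℝ)+(3-β)+β+1 = ((n:ℝ)+(m:ℝ)+3)+1 by ring,
      Real.Gamma_add_one (by positivity)]
  have c7 : Real.Gamma ((m:ℝ)+β+1) = Real.Gamma ((m:ℝ)+1+β) := by ring_nf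
  have c8 : Real.Gamma ((n:ℝ)+(3-β)+β+1) = ((n:ℝ)+3) * Real.Gamma ((n:ℝ)+3) := by
    rw [show (n:ℝ)+(3-β)+β+1 = ((n:ℝ)+3)+1 by ring, Real.Gamma_add_one (by positivity)]
  have c9 : Real.Gamma ((n:ℝ)-1+β+1) = Real.Gamma ((n:ℝ)+β) := by ring_nf
  have c10 : Real.Gamma ((n:ℝ)-1+(m:ℝ)+(3-β)+β+1) = Real.Gamma ((n:ℝ)+(m:ℝ)+3) := by ring_nf
  have c11 : Real.Gamma ((n:ℝ)-1+(3-β)+β+1) = Real.Gamma ((n:ℝ)+3) := by ring_nf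
  have c12 : Real.Gamma ((n:ℝ)+3) = ((n:ℝ)+2) * Real.Gamma ((n:ℝ)+2) := by
    rw [show (n:ℝ)+3 = ((n:ℝ)+2)+1 by ring, Real.Gamma_add_one (by positivity)]
  have c13 : ((m+2).factorial : ℝ) = ((m:ℝ)+2) * ((m+1).factorial : ℝ) := by
    rw [show m+2 = (m+1)+1 by ring, Nat.factorial_succ]
    push_cast
    ring
  rw [c1, c2, c3, c4, c5, c6, c7, c8, c9, c10, c11, c12, c13]
  have p1 : Real.Gamma ((n:ℝ)+1+β) ≠ 0 := ne_of_gt (Real.Gamma_pos_of_pos (by linarith))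
  have p2 : Real.Gamma ((n:ℝ)+β) ≠ 0 := ne_of_gt (Real.Gamma_pos_of_pos (by linarith))
  have p3 : Real.Gamma ((n:ℝ)+2) ≠ 0 := ne_of_gt (Real.Gamma_pos_of_pos (by linarith))
  have p4 : Real.Gamma ((n:ℝ)+(m:ℝ)+3) ≠ 0 := ne_of_gt (Real.Gamma_pos_of_pos (by linarith))
  have p5 : Real.Gamma ((m:ℝ)+1+β) ≠ 0 := ne_of_gt (Real.Gamma_pos_of_pos (by linarith))
  have f1 : ((m+1).factorial : ℝ) ≠ 0 := by positivity
  have f2 : (m.factorial : ℝ) ≠ 0 := by positivity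
  have f3 : (((n-1-m).factorial : ℕ) : ℝ) ≠ 0 := by positivity
  have hc : (2*(n:ℝ)+3) ≠ 0 := by linarith
  have hnm : ((n:ℝ)-(m:ℝ)) ≠ 0 := by linarith
  field_simp
  ring


/-- For `0 < β < 1`, `k ≥ 1` and `x ∈ (0,1]`, the left Riemann--Liouville
fractional derivative of order `2−β` of `s ↦ s(1−s)P_{k−1}^{(1,1)}(2s−1)` exists at `x`
(i.e. the first derivative of the underlying integral function is differentiable at `x`)
and equals `ζ_k(x)`. -/
theorem leftRL_modified_basis (β : ℝ) (hβ0 : 0 < β) (hβ1 : β < 1) (k : ℕ) (hk : 1 ≤ k)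
    (x : ℝ) (hx : x ∈ Set.Ioc (0:ℝ) 1) :
    DifferentiableAt ℝ
      (deriv (fun t : ℝ => ∫ s in (0:ℝ)..t,
        (t - s) ^ (1 - (2 - β)) * (s * (1 - s) * jacobiP ((k : ℤ) - 1) 1 1 (2 * s - 1)))) x
    ∧ leftRL (2 - β) (fun s : ℝ => s * (1 - s) * jacobiP ((k : ℤ) - 1) 1 1 (2 * s - 1)) x =
        zeta β k x := by
  obtain ⟨hx0, hx1⟩ := hx
  set n := k - 1 with hn
  have hkn : k = n + 1 := by omega
  have hkc : (k:ℝ) = (n:ℝ) + 1 := by rw [hkn]; push_cast; ring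
  have hJ1 : ∀ τ : ℝ, jacobiP ((k:ℤ)-1) 1 1 τ = jacobiPNat n 1 1 τ := by
    intro τ
    rw [jacobiP, if_pos (by omega : (0:ℤ) ≤ (k:ℤ)-1)]
    congr 1
    omega
  set E : ℕ → ℝ := fun m => Ecoef n m 1 1 with hE
  have hβ1' : (1:ℝ) - (2 - β) = β - 1 := by ring
  have hP : ∀ s : ℝ, s * (1 - s) * jacobiP ((k:ℤ)-1) 1 1 (2*s-1)
      = ∑ m ∈ range (n+1), E m * (s^(m+1) - s^(m+2)) := by
    intro s
    rw [hJ1, jacobiPNat_expand n 1 1 (by norm_num) (by norm_num) (by norm_num) s, Finset.mul_sum]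
    exact Finset.sum_congr rfl fun m _ => by simp only [hE]; ring
  set Bc : ℕ → ℝ := fun p => (p.factorial : ℝ) / ∏ j ∈ range (p+1), (β + (j:ℝ)) with hBcdef
  set G : ℝ → ℝ := fun t => ∑ m ∈ range (n+1),
      E m * (Bc (m+1) * t^((m:ℝ)+1+β) - Bc (m+2) * t^((m:ℝ)+2+β)) with hGdef
  set G1 : ℝ → ℝ := fun t => ∑ m ∈ range (n+1),
      E m * (Bc (m+1) * (((m:ℝ)+1+β) * t^((m:ℝ)+β))
        - Bc (m+2) * (((m:ℝ)+2+β) * t^((m:ℝ)+1+β))) with hG1def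
  set G2 : ℝ → ℝ := fun t => ∑ m ∈ range (n+1),
      E m * (Bc (m+1) * (((m:ℝ)+1+β) * (((m:ℝ)+β) * t^((m:ℝ)+β-1)))
        - Bc (m+2) * (((m:ℝ)+2+β) * (((m:ℝ)+1+β) * t^((m:ℝ)+β)))) with hG2def
  have hint : ∀ t : ℝ, 0 < t →
      (∫ s in (0:ℝ)..t, (t-s)^(1-(2-β)) * (s * (1-s) * jacobiP ((k:ℤ)-1) 1 1 (2*s-1))) = G t := by
    intro t ht
    have heq : ∀ s : ℝ, (t-s)^(1-(2-β)) * (s * (1-s) * jacobiP ((k:ℤ)-1) 1 1 (2*s-1))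
        = ∑ m ∈ range (n+1), (E m * ((t-s)^(β-1) * s^(m+1)) - E m * ((t-s)^(β-1) * s^(m+2))) := by
      intro s
      rw [hβ1', hP s, Finset.mul_sum]
      exact Finset.sum_congr rfl fun m _ => by ring
    rw [intervalIntegral.integral_congr (g := fun s => ∑ m ∈ range (n+1),
        (E m * ((t-s)^(β-1) * s^(m+1)) - E m * ((t-s)^(β-1) * s^(m+2)))) (fun s _ => heq s)]
    rw [intervalIntegral.integral_finset_sum (fun m _ =>
      (((integrable_monomial hβ0 (m+1) t).const_mul (E m)).sub
        ((integrable_monomial hβ0 (m+2) t).const_mul (E m))))]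
    simp only [hGdef]
    apply Finset.sum_congr rfl
    intro m _
    rw [intervalIntegral.integral_sub ((integrable_monomial hβ0 (m+1) t).const_mul (E m))
        ((integrable_monomial hβ0 (m+2) t).const_mul (E m)),
      intervalIntegral.integral_const_mul, intervalIntegral.integral_const_mul,
      integral_monomial hβ0 (m+1) ht, integral_monomial hβ0 (m+2) ht]
    simp only [hBcdef]
    push_cast
    ring_nf
  have hG1d : ∀ t : ℝ, 0 < t → HasDerivAt G (G1 t) t := by
    intro t ht
    simp only [hGdef, hG1def]
    apply HasDerivAt.fun_sum
    intro m _
    have h1 : HasDerivAt (fun y : ℝ => y^((m:ℝ)+1+β)) (((m:ℝ)+1+β) * t^((m:ℝ)+β)) t := by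
      have h := Real.hasDerivAt_rpow_const (x := t) (p := (m:ℝ)+1+β) (Or.inl (ne_of_gt ht))
      rw [show (m:ℝ)+1+β-1 = (m:ℝ)+β by ring] at h
      exact h
    have h2 : HasDerivAt (fun y : ℝ => y^((m:ℝ)+2+β)) (((m:ℝ)+2+β) * t^((m:ℝ)+1+β)) t := by
      have h := Real.hasDerivAt_rpow_const (x := t) (p := (m:ℝ)+2+β) (Or.inl (ne_of_gt ht))
      rw [show (m:ℝ)+2+β-1 = (m:ℝ)+1+β by ring] at h
      exact h
    exact ((h1.const_mul (Bc (m+1))).sub (h2.const_mul (Bc (m+2)))).const_mul (E m)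
  have hG2d : ∀ t : ℝ, 0 < t → HasDerivAt G1 (G2 t) t := by
    intro t ht
    simp only [hG1def, hG2def]
    apply HasDerivAt.fun_sum
    intro m _
    have h1 : HasDerivAt (fun y : ℝ => y^((m:ℝ)+β)) (((m:ℝ)+β) * t^((m:ℝ)+β-1)) t :=
      Real.hasDerivAt_rpow_const (x := t) (p := (m:ℝ)+β) (Or.inl (ne_of_gt ht))
    have h2 : HasDerivAt (fun y : ℝ => y^((m:ℝ)+1+β)) (((m:ℝ)+1+β) * t^((m:ℝ)+β)) t := by
      have h := Real.hasDerivAt_rpow_const (x := t) (p := (m:ℝ)+1+β) (Or.inl (ne_of_gt ht))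
      rw [show (m:ℝ)+1+β-1 = (m:ℝ)+β by ring] at h
      exact h
    exact (((h1.const_mul (((m:ℝ)+1+β))).const_mul (Bc (m+1))).sub
      ((h2.const_mul (((m:ℝ)+2+β))).const_mul (Bc (m+2)))).const_mul (E m)
  have hmem : Set.Ioi (0:ℝ) ∈ nhds x := Ioi_mem_nhds hx0
  have hHG : (fun t : ℝ => ∫ s in (0:ℝ)..t,
      (t - s) ^ (1 - (2 - β)) * (s * (1 - s) * jacobiP ((k : ℤ) - 1) 1 1 (2 * s - 1)))
      =ᶠ[nhds x] G := Filter.eventuallyEq_of_mem hmem (fun t ht => hint t ht)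
  have hDG : deriv (fun t : ℝ => ∫ s in (0:ℝ)..t,
      (t - s) ^ (1 - (2 - β)) * (s * (1 - s) * jacobiP ((k : ℤ) - 1) 1 1 (2 * s - 1)))
      =ᶠ[nhds x] G1 :=
    (hHG.deriv).trans (Filter.eventuallyEq_of_mem hmem (fun t ht => (hG1d t ht).deriv))
  constructor
  · rw [hDG.differentiableAt_iff]
    exact (hG2d x hx0).differentiableAt
  · have hval : leftRL (2 - β) (fun s : ℝ => s * (1 - s) * jacobiP ((k : ℤ) - 1) 1 1 (2 * s - 1)) x
        = (1 / Real.Gamma β) * G2 x := by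
      rw [leftRL]
      rw [show (2:ℝ) - (2 - β) = β by ring]
      congr 1
      rw [hDG.deriv_eq]
      exact (hG2d x hx0).deriv
    rw [hval]
    clear hval hDG hHG hG2d hG1d hint
    have hΓβ : Real.Gamma β ≠ 0 := ne_of_gt (Real.Gamma_pos_of_pos hβ0)
    have hGammaProd : ∀ q : ℕ, Real.Gamma β * ∏ j ∈ range q, (β + (j:ℝ)) = Real.Gamma (β + q) := by
      intro q
      induction q with
      | zero => simp
      | succ q ih =>
          rw [Finset.prod_range_succ, ← mul_assoc, ih,
            show β + ((q+1:ℕ):ℝ) = (β + q) + 1 by push_cast; ring,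
            Real.Gamma_add_one (by positivity)]
          ring
    have hBc : ∀ p : ℕ, 1 ≤ p → (1/Real.Gamma β) * (Bc p * (((p:ℝ)+β) * ((p:ℝ)+β-1)))
        = (p.factorial : ℝ) / Real.Gamma ((p:ℝ)+β-1) := by
      intro p hp
      have hp1 : (1:ℝ) ≤ (p:ℝ) := by exact_mod_cast hp
      have hg1 : (0:ℝ) < (p:ℝ)+β-1 := by linarith
      have hΓp : Real.Gamma ((p:ℝ)+β-1) ≠ 0 := ne_of_gt (Real.Gamma_pos_of_pos hg1)
      have key : Real.Gamma β * ∏ j ∈ range (p+1), (β + (j:ℝ))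
          = ((p:ℝ)+β) * (((p:ℝ)+β-1) * Real.Gamma ((p:ℝ)+β-1)) := by
        rw [hGammaProd (p+1),
          show β + ((p+1:ℕ):ℝ) = (((p:ℝ)+β-1)+1)+1 by push_cast; ring,
          Real.Gamma_add_one (by linarith), Real.Gamma_add_one (by linarith)]
        ring
      have hprodpos : (0:ℝ) < ∏ j ∈ range (p+1), (β + (j:ℝ)) :=
        Finset.prod_pos (fun j _ => by positivity)
      simp only [hBcdef]
      field_simp
      linear_combination (-1:ℝ) * key
    have h3β : (-1:ℝ) < 3 - β := by linarith
    have hJ1z : jacobiP ((k:ℤ)-1) (3-β) (β-1) (2*x-1)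
        = ∑ m ∈ range (n+1), Ecoef n m (3-β) (β-1) * x^m := by
      rw [jacobiP, if_pos (by omega : (0:ℤ) ≤ (k:ℤ)-1),
        show ((k:ℤ)-1).toNat = n by omega]
      exact jacobiPNat_expand n (3-β) (β-1) h3β (by linarith) (by linarith) x
    have hJ2z : jacobiP ((k:ℤ)-1) (3-β) β (2*x-1)
        = ∑ m ∈ range (n+1), Ecoef n m (3-β) β * x^m := by
      rw [jacobiP, if_pos (by omega : (0:ℤ) ≤ (k:ℤ)-1),
        show ((k:ℤ)-1).toNat = n by omega]
      exact jacobiPNat_expand n (3-β) β h3β (by linarith) (by linarith) x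
    have hJ3z : jacobiP ((k:ℤ)-2) (3-β) β (2*x-1)
        = ∑ m ∈ range n, Ecoef (n-1) m (3-β) β * x^m := by
      by_cases hk1 : k = 1
      · have hn0 : n = 0 := by omega
        rw [hk1, hn0]
        norm_num [jacobiP]
      · have hk2 : 2 ≤ k := by omega
        rw [jacobiP, if_pos (by omega : (0:ℤ) ≤ (k:ℤ)-2),
          show ((k:ℤ)-2).toNat = n-1 by omega,
          jacobiPNat_expand (n-1) (3-β) β h3β (by linarith) (by linarith) x,
          show n-1+1 = n by omega]
    rw [zeta, hJ1z, hJ2z, hJ3z, hkc,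
      show (n:ℝ)+1+1 = (n:ℝ)+2 by ring, show (n:ℝ)+1-1+β = (n:ℝ)+β by ring,
      show (n:ℝ)+1+2 = (n:ℝ)+3 by ring, show 2*((n:ℝ)+1)+1 = 2*(n:ℝ)+3 by ring]
    have xs1 : ∀ m : ℕ, x^((m:ℝ)+β-1) = x^(β-1) * x^m := by
      intro m
      rw [show (m:ℝ)+β-1 = (β-1)+(m:ℝ) by ring, Real.rpow_add hx0, Real.rpow_natCast]
    have xs2 : ∀ m : ℕ, x^((m:ℝ)+β) = x^β * x^m := by
      intro m
      rw [show (m:ℝ)+β = β+(m:ℝ) by ring, Real.rpow_add hx0, Real.rpow_natCast]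
    have hterm : ∀ m ∈ range (n+1), (1/Real.Gamma β) *
        (E m * (Bc (m+1) * (((m:ℝ)+1+β) * (((m:ℝ)+β) * x^((m:ℝ)+β-1)))
          - Bc (m+2) * (((m:ℝ)+2+β) * (((m:ℝ)+1+β) * x^((m:ℝ)+β)))))
        = x^(β-1) * ((E m * (((m+1).factorial : ℝ)/Real.Gamma ((m:ℝ)+β))) * x^m)
          - x^β * ((E m * (((m+2).factorial : ℝ)/Real.Gamma ((m:ℝ)+1+β))) * x^m) := by
      intro m _
      have c1 := hBc (m+1) (by omega)
      have c2 := hBc (m+2) (by omega)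
      push_cast at c1 c2
      rw [show (m:ℝ)+1+β-1 = (m:ℝ)+β by ring] at c1
      rw [show (m:ℝ)+2+β-1 = (m:ℝ)+1+β by ring] at c2
      rw [xs1 m, xs2 m]
      linear_combination (E m * (x^(β-1) * x^m)) * c1 - (E m * (x^β * x^m)) * c2
    simp only [hG2def]
    rw [Finset.mul_sum, Finset.sum_congr rfl hterm, Finset.sum_sub_distrib,
      ← Finset.mul_sum, ← Finset.mul_sum]
    have hsum1 : ∑ m ∈ range (n+1), (E m * (((m+1).factorial : ℝ)/Real.Gamma ((m:ℝ)+β))) * x^m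
        = (Real.Gamma ((n:ℝ)+2)/Real.Gamma ((n:ℝ)+β)) *
            ∑ m ∈ range (n+1), Ecoef n m (3-β) (β-1) * x^m := by
      rw [Finset.mul_sum]
      refine Finset.sum_congr rfl fun m _ => ?_
      have h := ident1 hβ0 hβ1 n m
      simp only [hE]
      linear_combination (x^m : ℝ) * h
    have hsum2 : ∑ m ∈ range (n+1), (E m * (((m+2).factorial : ℝ)/Real.Gamma ((m:ℝ)+1+β))) * x^m
        = (Real.Gamma ((n:ℝ)+3)/Real.Gamma ((n:ℝ)+1+β)) * (((n:ℝ)+3)/(2*(n:ℝ)+3)) *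
            ∑ m ∈ range (n+1), Ecoef n m (3-β) β * x^m
          + (Real.Gamma ((n:ℝ)+2)/Real.Gamma ((n:ℝ)+β)) * (((n:ℝ)+1)/(2*(n:ℝ)+3)) *
            ∑ m ∈ range n, Ecoef (n-1) m (3-β) β * x^m := by
      rw [Finset.mul_sum, Finset.mul_sum,
        Finset.sum_range_succ
          (fun m => (E m * (((m+2).factorial : ℝ)/Real.Gamma ((m:ℝ)+1+β))) * x^m) n,
        Finset.sum_range_succ
          (fun m => (Real.Gamma ((n:ℝ)+3)/Real.Gamma ((n:ℝ)+1+β)) * (((n:ℝ)+3)/(2*(n:ℝ)+3)) *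
            (Ecoef n m (3-β) β * x^m)) n]
      have h2a : ∀ m ∈ range n,
          (E m * (((m+2).factorial : ℝ)/Real.Gamma ((m:ℝ)+1+β))) * x^m
          = (Real.Gamma ((n:ℝ)+3)/Real.Gamma ((n:ℝ)+1+β)) * (((n:ℝ)+3)/(2*(n:ℝ)+3)) *
              (Ecoef n m (3-β) β * x^m)
            + (Real.Gamma ((n:ℝ)+2)/Real.Gamma ((n:ℝ)+β)) * (((n:ℝ)+1)/(2*(n:ℝ)+3)) *
              (Ecoef (n-1) m (3-β) β * x^m) := by
        intro m hm
        rw [mem_range] at hm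
        have h := ident2a hβ0 hβ1 n m hm
        simp only [hE]
        linear_combination (x^m : ℝ) * h
      rw [Finset.sum_congr rfl h2a, Finset.sum_add_distrib]
      have h2b := ident2b hβ0 hβ1 n
      simp only [hE]
      linear_combination (x^n : ℝ) * h2b
    rw [hsum1, hsum2]
    ring
end
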